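/- Let m be even and s = g = 2, with n = m/2 users whose side information sets A_i = {2i-1, 2i} (mod m) are pairwise disjoint. Under the linear decodability and privacy conditions (each user decodes exactly one message outside its side information, via a linear code with row span E, and e_t ∉ E for all t), the dimension of E is at least ⌈m/4⌉. -/
import Mathlib

private lemma iterMul {α : Type*} (b : α → α) (x : α) (p : ℕ) (hp : b^[p] x = x) :
    ∀ c, b^[c * p] x = x := by
  intro c
  induction c with
  | zero => simp
  | succ c ih => rw [Nat.succ_mul, Function.iterate_add_apply, hp, ih]

private lemma iterMod {α : Type*} (b : α → α) (x : α) (p : ℕ) (hp : b^[p] x = x) (t : ℕ) :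
    b^[t] x = b^[t % p] x := by
  have h1 : b^[p * (t / p)] x = x := by rw [mul_comm]; exact iterMul b x p hp _
  conv_lhs => rw [← Nat.mod_add_div t p]
  rw [Function.iterate_add_apply, h1]

private lemma transversal {α : Type*} [Fintype α] [DecidableEq α] (b : α → α)
    (hb : ∀ x, b x ≠ x) :
    ∃ C : Finset α, 2 * C.card ≤ Fintype.card α ∧
      ∀ S : Finset α, (∀ i ∈ S, i ∉ C) → (∀ i ∈ S, ∃ j ∈ S, b j = i) → S = ∅ := by
  classical
  set P : Set α := {x | ∃ k, 0 < k ∧ b^[k] x = x} with hPdef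
  have hmin_congr : ∀ (S1 S2 : Finset α) (h1 : S1.Nonempty) (h2 : S2.Nonempty),
      S1 = S2 → h1.choose = h2.choose := by rintro S1 S2 h1 h2 rfl; rfl
  have hPiter : ∀ x ∈ P, ∀ t, b^[t] x ∈ P := by
    rintro x ⟨k, hk, hx⟩ t
    exact ⟨k, hk, by
      rw [← Function.iterate_add_apply, Nat.add_comm, Function.iterate_add_apply, hx]⟩
  have hsymm : ∀ x ∈ P, ∀ t, ∃ s, b^[s] (b^[t] x) = x := by
    rintro x ⟨k, hk, hx⟩ t
    refine ⟨(t + 1) * k - t, ?_⟩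
    rw [← Function.iterate_add_apply]
    have h2 : (t + 1) * 1 ≤ (t + 1) * k := Nat.mul_le_mul_left _ hk
    have ht : (t + 1) * k - t + t = (t + 1) * k := by omega
    rw [ht]
    exact iterMul b x k hx (t + 1)
  set PF : Finset α := Finset.univ.filter (· ∈ P) with hPF
  set rep : α → α := fun x =>
    if h : (PF.filter (fun y => ∃ t, b^[t] x = y)).Nonempty
    then h.choose else x
    with hrepdef
  have hfilter_ne : ∀ x ∈ P, (PF.filter (fun y => ∃ t, b^[t] x = y)).Nonempty := by
    intro x hx
    exact ⟨x, Finset.mem_filter.mpr ⟨Finset.mem_filter.mpr ⟨Finset.mem_univ x, hx⟩, 0, rfl⟩⟩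
  have hrep_spec : ∀ x ∈ P, rep x ∈ P ∧ ∃ t, b^[t] x = rep x := by
    intro x hx
    have h := hfilter_ne x hx
    have hmem := h.choose_spec
    rw [Finset.mem_filter, Finset.mem_filter] at hmem
    have : rep x = h.choose := by
      rw [hrepdef]; simp only [dif_pos h]
    rw [this]
    exact ⟨hmem.1.2, hmem.2⟩
  have hrep_congr : ∀ x ∈ P, ∀ t, rep (b^[t] x) = rep x := by
    intro x hx t
    have hy : b^[t] x ∈ P := hPiter x hx t
    have hseteq : (PF.filter (fun y => ∃ s, b^[s] (b^[t] x) = y))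
        = (PF.filter (fun y => ∃ s, b^[s] x = y)) := by
      apply Finset.filter_congr
      intro z _
      constructor
      · rintro ⟨s, hs⟩
        exact ⟨s + t, by rw [Function.iterate_add_apply, hs]⟩
      · rintro ⟨s, hs⟩
        obtain ⟨s', hs'⟩ := hsymm x hx t
        exact ⟨s + s', by rw [Function.iterate_add_apply, hs', hs]⟩
    have h1 := hfilter_ne _ hy
    have h2 := hfilter_ne x hx
    have e1 : rep (b^[t] x) = h1.choose := by
      rw [hrepdef]; simp only [dif_pos h1]
    have e2 : rep x = h2.choose := by
      rw [hrepdef]; simp only [dif_pos h2]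
    rw [e1, e2]
    exact hmin_congr _ _ _ _ hseteq
  set C : Finset α := PF.image rep with hC
  have hCrep : ∀ c ∈ C, rep c = c ∧ c ∈ P := by
    intro c hc
    obtain ⟨x, hx, hrx⟩ := Finset.mem_image.mp hc
    have hxP : x ∈ P := (Finset.mem_filter.mp hx).2
    obtain ⟨hrP, t, ht⟩ := hrep_spec x hxP
    have hcP : c ∈ P := hrx ▸ hrP
    refine ⟨?_, hcP⟩
    have : rep (b^[t] x) = rep x := hrep_congr x hxP t
    rw [ht, hrx] at this
    exact this
  have hrepb : ∀ c ∈ P, rep (b c) = rep c := by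
    intro c hc
    have := hrep_congr c hc 1
    rwa [Function.iterate_one] at this
  have hcard : 2 * C.card ≤ Fintype.card α := by
    have hdisjCD : Disjoint C (C.image b) := by
      rw [Finset.disjoint_left]
      intro u hu hub
      obtain ⟨c, hc, hbc⟩ := Finset.mem_image.mp hub
      have hrepu : rep u = u := (hCrep u hu).1
      have hcP : c ∈ P := (hCrep c hc).2
      have hrepc : rep c = c := (hCrep c hc).1
      have : rep u = c := by rw [← hbc, hrepb c hcP, hrepc]
      rw [hrepu] at this
      exact hb c (by rw [hbc, this])
    have hinj : Set.InjOn b ↑C := by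
      intro c hc c' hc' hcc
      have h1 : rep (b c) = c := by
        rw [hrepb c (hCrep c (Finset.mem_coe.mp hc)).2, (hCrep c (Finset.mem_coe.mp hc)).1]
      have h2 : rep (b c') = c' := by
        rw [hrepb c' (hCrep c' (Finset.mem_coe.mp hc')).2, (hCrep c' (Finset.mem_coe.mp hc')).1]
      rw [← h1, ← h2, hcc]
    have himg : (C.image b).card = C.card := Finset.card_image_of_injOn hinj
    have hle : (C ∪ C.image b).card ≤ Fintype.card α := by
      rw [← Finset.card_univ]; exact Finset.card_le_univ _
    rw [Finset.card_union_of_disjoint hdisjCD, himg] at hle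
    omega
  refine ⟨C, hcard, ?_⟩
  intro S hSC hSclosed
  by_contra hS
  obtain ⟨i₀, hi₀⟩ := Finset.nonempty_iff_ne_empty.mpr hS
  have hstep : ∀ p : {x // x ∈ S}, ∃ q : {x // x ∈ S}, b q.val = p.val := by
    intro p
    obtain ⟨j, hj, hbj⟩ := hSclosed p.val p.2
    exact ⟨⟨j, hj⟩, hbj⟩
  choose g hg using hstep
  set f : ℕ → {x // x ∈ S} := fun k => g^[k] ⟨i₀, hi₀⟩ with hf
  have hfb : ∀ t k, b^[t] (f (k + t)).val = (f k).val := by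
    intro t
    induction t with
    | zero => intro k; rfl
    | succ t ih =>
      intro k
      have hstep1 : f (k + (t + 1)) = g (f (k + t)) := by
        rw [hf]
        show g^[(k+t)+1] _ = g (g^[k+t] _)
        rw [Function.iterate_succ_apply']
      rw [show k + (t+1) = (k+t)+1 from rfl] at hstep1 ⊢
      rw [Function.iterate_succ_apply, show b ((f ((k+t)+1)).val) = (f (k+t)).val by
        rw [hstep1]; exact hg (f (k+t))]
      exact ih k
  have key : ∀ k l, k < l → f k = f l → False := by
    intro k l hkl hfe
    set p := l - k with hp
    have hp0 : 0 < p := by omega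
    have hper : b^[p] (f l).val = (f l).val := by
      have h := hfb p k
      rw [show k + p = l by omega] at h
      rw [h, hfe]
    have hfP : (f l).val ∈ P := ⟨p, hp0, hper⟩
    have hrepC : rep (f l).val ∈ C :=
      Finset.mem_image.mpr ⟨(f l).val, Finset.mem_filter.mpr ⟨Finset.mem_univ _, hfP⟩, rfl⟩
    obtain ⟨-, t, ht⟩ := hrep_spec (f l).val hfP
    have htlt : t % p < p := Nat.mod_lt _ hp0
    have ht' : b^[t % p] (f l).val = rep (f l).val := by
      rw [← iterMod b _ p hper t, ht]
    have hmemS : rep (f l).val ∈ S := by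
      have h := hfb (t % p) (l - t % p)
      rw [show l - t % p + t % p = l by omega] at h
      rw [← ht', h]
      exact (f (l - t % p)).2
    exact hSC _ hmemS hrepC
  obtain ⟨k, l, hne, hfe⟩ := Finite.exists_ne_map_eq_of_infinite f
  rcases Nat.lt_or_ge k l with h | h
  · exact key k l h hfe
  · exact key l k (by omega) hfe.symm
theorem stmt_11 (F : Type*) [Field F] (m : ℕ) (hm : 0 < m) (hme : Even m)
    (A : Fin (m / 2) → Set (ZMod m))
    (hA : ∀ i, A i = {((2 * i.val + 1 : ℕ) : ZMod m), ((2 * i.val + 2 : ℕ) : ZMod m)})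
    (hdisj : Pairwise (Function.onFun Disjoint A))
    (E : Submodule F (ZMod m → F)) (d : Fin (m / 2) → ZMod m)
    (hdec : ∀ i, d i ∉ A i ∧ ∃ v ∈ E, v (d i) ≠ 0 ∧ ∀ j, v j ≠ 0 → j ∈ A i ∪ {d i})
    (hpriv : ∀ i, ∀ j ∉ A i ∪ {d i},
      ¬ ∃ v ∈ E, v j ≠ 0 ∧ ∀ t, v t ≠ 0 → t ∈ A i ∪ {j})
    (hbasis : ∀ t : ZMod m, Pi.single t (1 : F) ∉ E) :
    (m + 3) / 4 ≤ Module.finrank F E := by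
  classical
  haveI : NeZero m := ⟨hm.ne'⟩
  have hm2 : 2 * (m / 2) = m := Nat.mul_div_cancel' hme.two_dvd
  -- coverage
  have hcover : ∀ t : ZMod m, ∃ j : Fin (m / 2), t ∈ A j := by
    intro t
    have hval : t.val < m := ZMod.val_lt t
    set r : ℕ := if t.val = 0 then m else t.val with hr
    have hr1 : 1 ≤ r ∧ r ≤ m := by rw [hr]; split_ifs <;> omega
    have hrt : (r : ZMod m) = t := by
      rw [hr]; split_ifs with h0
      · rw [ZMod.natCast_self]
        exact ((ZMod.val_eq_zero t).mp h0).symm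
      · exact ZMod.natCast_zmod_val t
    set q : ℕ := (r - 1) / 2 with hq
    have hqlt : q < m / 2 := by omega
    refine ⟨⟨q, hqlt⟩, ?_⟩
    rw [hA]
    have hvq : (⟨q, hqlt⟩ : Fin (m / 2)).val = q := rfl
    rw [hvq]
    have hcase : r = 2 * q + 1 ∨ r = 2 * q + 2 := by omega
    simp only [Set.mem_insert_iff, Set.mem_singleton_iff]
    rcases hcase with hc | hc
    · left; rw [← hrt, hc]
    · right; rw [← hrt, hc]
  have huniq : ∀ (i j : Fin (m / 2)) (t : ZMod m), t ∈ A i → t ∈ A j → i = j := by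
    intro i j t hi hj
    by_contra hne
    exact Set.disjoint_left.mp (hdisj hne) hi hj
  -- decoding vectors
  have hd := fun i => (hdec i).1
  choose v hvE hvd hvs using fun i => (hdec i).2
  have hvA : ∀ i, ∃ t ∈ A i, v i t ≠ 0 := by
    intro i
    by_contra hcon
    push_neg at hcon
    apply hbasis (d i)
    have heq : Pi.single (d i) (1 : F) = (v i (d i))⁻¹ • v i := by
      funext t
      by_cases ht : t = d i
      · subst ht
        rw [Pi.single_eq_same, Pi.smul_apply, smul_eq_mul, inv_mul_cancel₀ (hvd i)]
      · rw [Pi.single_eq_of_ne ht, Pi.smul_apply, smul_eq_mul]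
        have hvt : v i t = 0 := by
          by_contra hv0
          have h' := hvs i t hv0
          rw [Set.mem_union, Set.mem_singleton_iff] at h'
          rcases h' with h | h
          · exact hv0 (hcon t h)
          · exact ht h
        rw [hvt, mul_zero]
    rw [heq]
    exact E.smul_mem _ (hvE i)
  choose tp htpA htpv using hvA
  -- block map for d
  choose bl hbl using fun i => hcover (d i)
  have hblne : ∀ i, bl i ≠ i := by
    intro i hbi
    apply hd i
    have h2 := hbl i
    rw [hbi] at h2
    exact h2
  -- key cancellation lemma
  have hkey : ∀ (S : Finset (Fin (m / 2))) (c : Fin (m / 2) → F),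
      ∑ j ∈ S, c j • v j = 0 → ∀ i ∈ S, c i ≠ 0 → ∃ j ∈ S, c j ≠ 0 ∧ bl j = i := by
    intro S c hsum i hiS hci
    by_contra hcon
    push_neg at hcon
    have h0 : ∑ j ∈ S, c j * v j (tp i) = 0 := by
      have h := congrFun hsum (tp i)
      simpa using h
    have hsingle : ∑ j ∈ S, c j * v j (tp i) = c i * v i (tp i) := by
      apply Finset.sum_eq_single_of_mem i hiS
      intro j hjS hji
      by_cases hcj : c j = 0
      · rw [hcj, zero_mul]
      · have hbj := hcon j hjS hcj
        have hvj : v j (tp i) = 0 := by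
          by_contra hv0
          have h' := hvs j _ hv0
          rw [Set.mem_union, Set.mem_singleton_iff] at h'
          rcases h' with h | h
          · exact hji (huniq j i _ h (htpA i))
          · apply hbj
            have hmem : tp i ∈ A (bl j) := by rw [h]; exact hbl j
            exact huniq (bl j) i _ hmem (htpA i)
        rw [hvj, mul_zero]
    rw [hsingle] at h0
    exact mul_ne_zero hci (htpv i) h0
  obtain ⟨C, hCcard, hCgood⟩ := transversal bl hblne
  set T : Finset (Fin (m / 2)) := Finset.univ \ C with hT
  have hTind : ∀ c : Fin (m / 2) → F, ∑ j ∈ T, c j • v j = 0 → ∀ i ∈ T, c i = 0 := by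
    intro c hsum i hiT
    by_contra hci
    have hSempty : T.filter (fun j => c j ≠ 0) = ∅ := by
      apply hCgood
      · intro x hx
        exact (Finset.mem_sdiff.mp (Finset.mem_filter.mp hx).1).2
      · intro x hx
        obtain ⟨hxT, hcx⟩ := Finset.mem_filter.mp hx
        obtain ⟨j, hjT, hcj, hbj⟩ := hkey T c hsum x hxT hcx
        exact ⟨j, Finset.mem_filter.mpr ⟨hjT, hcj⟩, hbj⟩
    have hmem : i ∈ T.filter (fun j => c j ≠ 0) := Finset.mem_filter.mpr ⟨hiT, hci⟩
    rw [hSempty] at hmem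
    exact absurd hmem (Finset.notMem_empty i)
  -- linear independence
  have hli : LinearIndependent F (fun i : {x // x ∈ T} => v i.val) := by
    rw [linearIndependent_iff']
    intro s g hsum i his
    set c : Fin (m / 2) → F := fun x => ∑ j ∈ s, if j.val = x then g j else 0 with hc
    have hcv : ∀ j ∈ s, c j.val = g j := by
      intro j hjs
      rw [hc]
      simp only []
      rw [Finset.sum_eq_single_of_mem j hjs]
      · rw [if_pos rfl]
      · intro k hks hkj
        rw [if_neg (fun h => hkj (Subtype.ext h))]
    have hsum' : ∑ x ∈ T, c x • v x = 0 := by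
      have heq : ∑ x ∈ T, c x • v x = ∑ j ∈ s, g j • v j.val := by
        rw [hc]
        simp only [Finset.sum_smul, ite_smul, zero_smul]
        rw [Finset.sum_comm]
        apply Finset.sum_congr rfl
        intro j hjs
        rw [Finset.sum_ite_eq T j.val (fun x => g j • v x)]
        rw [if_pos j.2]
      rw [heq, hsum]
    rw [← hcv i his]
    exact hTind c hsum' i.val i.2
  -- finrank bound
  have hle : Fintype.card {x // x ∈ T} ≤ Module.finrank F E := by
    have hw : LinearIndependent F (fun i : {x // x ∈ T} => (⟨v i.val, hvE i.val⟩ : E)) := by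
      apply LinearIndependent.of_comp E.subtype
      exact hli
    exact hw.fintype_card_le_finrank
  rw [Fintype.card_coe] at hle
  have hTc : T.card = m / 2 - C.card := by
    rw [hT, Finset.card_sdiff_of_subset (Finset.subset_univ C)]
    simp
  have hCle : C.card ≤ m / 2 := by
    have h := Finset.card_le_univ C
    simpa using h
  rw [Fintype.card_fin] at hCcard
  omega
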